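/- arXiv:2001.09643 — 5 statements merged into one kernel-verified Lean document; each statement's English description precedes it below -/
import Mathlib

section
/- A simplex x of degree n in a simplicial set X has degreewise injective representing map Δ[n] → X if and only if its n+1 vertices xε₀, ..., xεₙ are pairwise distinct. -/
open CategoryTheory Simplicial Opposite MonoidalCategory Limits

/-- The representing map of a simplex is degreewise injective. -/
def SSet.RepInj (X : SSet.{0}) {n : ℕ} (x : X _⦋n⦌) : Prop :=
  ∀ m : SimplexCategoryᵒᵖ, Function.Injective (((SSet.yonedaEquiv (X := X) (n := ⦋n⦌)).symm x).app m)

/-- The `i`-th vertex `x εᵢ` of a simplex. -/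
def SSet.vert (X : SSet.{0}) {n : ℕ} (x : X _⦋n⦌) (i : Fin (n + 1)) : X _⦋0⦌ :=
  X.map (SimplexCategory.const ⦋0⦌ ⦋n⦌ i).op x

/-- A simplex is degenerate if it is obtained from a simplex of strictly
lower degree by the action of an operator. -/
def SSet.IsDegenerate (X : SSet.{0}) {n : ℕ} (x : X _⦋n⦌) : Prop :=
  ∃ (m : ℕ) (_ : m < n) (α : (⦋n⦌ : SimplexCategory) ⟶ ⦋m⦌) (y : X _⦋m⦌),
    X.map α.op y = x

/-- A simplicial set is non-singular if every non-degenerate simplex has a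
degreewise injective representing map. -/
def SSet.NonSingular (X : SSet.{0}) : Prop :=
  ∀ (n : ℕ) (x : X _⦋n⦌), ¬ X.IsDegenerate x → X.RepInj x

lemma repInj_key (X : SSet.{0}) {n : ℕ} (x : X _⦋n⦌) (m : SimplexCategoryᵒᵖ)
    (a : Δ[n].obj m) :
    ((SSet.yonedaEquiv (X := X) (n := ⦋n⦌)).symm x).app m a
      = X.map (SSet.stdSimplex.objEquiv a).op x := rfl

lemma vert_eq (X : SSet.{0}) {n : ℕ} (x : X _⦋n⦌) (m : SimplexCategoryᵒᵖ)
    (f : m.unop ⟶ ⦋n⦌) (i : Fin (m.unop.len + 1)) :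
    X.vert x (f.toOrderHom i) = X.map (SimplexCategory.const ⦋0⦌ m.unop i).op (X.map f.op x) := by
  rw [← FunctorToTypes.map_comp_apply, ← op_comp, SimplexCategory.const_comp]
  rfl

/-- A simplex `x` of degree `n` in a simplicial set `X` has degreewise
injective representing map `Δ[n] → X` if and only if its `n+1` vertices
`x ε₀, …, x εₙ` are pairwise distinct. -/
theorem repInj_iff_vertices_injective (X : SSet.{0}) {n : ℕ} (x : X _⦋n⦌) :
    X.RepInj x ↔ Function.Injective (X.vert x) := by
  constructor
  · intro h i j hij
    have h0 := h (op ⦋0⦌)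
    have : ((SSet.yonedaEquiv (X := X) (n := ⦋n⦌)).symm x).app (op ⦋0⦌)
        ((SSet.stdSimplex.objEquiv).symm (SimplexCategory.const ⦋0⦌ ⦋n⦌ i))
        = ((SSet.yonedaEquiv (X := X) (n := ⦋n⦌)).symm x).app (op ⦋0⦌)
        ((SSet.stdSimplex.objEquiv).symm (SimplexCategory.const ⦋0⦌ ⦋n⦌ j)) := by
      rw [repInj_key, repInj_key, Equiv.apply_symm_apply, Equiv.apply_symm_apply]
      exact hij
    have h2 := h0 this
    have h3 : SimplexCategory.const ⦋0⦌ ⦋n⦌ i = SimplexCategory.const ⦋0⦌ ⦋n⦌ j :=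
      (SSet.stdSimplex.objEquiv).symm.injective h2
    have := congrArg (fun g => SimplexCategory.Hom.toOrderHom g 0) h3
    simpa using this
  · intro h m a b hab
    rw [repInj_key, repInj_key] at hab
    set f := SSet.stdSimplex.objEquiv a with hf
    set g := SSet.stdSimplex.objEquiv b with hg
    have hfg : f = g := by
      ext i : 3
      apply h
      rw [vert_eq X x m f i, vert_eq X x m g i, hab]
    apply (SSet.stdSimplex.objEquiv).injective
    rw [← hf, ← hg, hfg]
end

section
/- Let X be a non-singular simplicial set and x an n-simplex of X with xε_k = xε_l for some k < l. Then the degenerate part x♭ of x factors (uniquely) through the degeneracy operator σ_k ∘ ... ∘ σ_{l-1} : [n] → [n-(l-k)]. -/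
open CategoryTheory Simplicial Opposite MonoidalCategory Limits

/-- The iterated elementary degeneracy operator `σ_k ∘ ⋯ ∘ σ_{k+d-1} : [p+d] → [p]`
(for `k ≤ p`), which collapses the interval `{k, …, k+d}` to `k`. -/
def sigmaIter (k : ℕ) : ∀ (p d : ℕ), k ≤ p → ((⦋p + d⦌ : SimplexCategory) ⟶ ⦋p⦌) := fun p d h => match p, d, h with
  | _, 0, _ => 𝟙 _
  | p, d + 1, h => SimplexCategory.σ ⟨k + d, Nat.lt_succ_of_le (Nat.add_le_add_right h d)⟩ ≫ sigmaIter k p d h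

lemma sigma_val {n : ℕ} (jv : ℕ) (hj : jv < n + 1) (i : Fin (n + 2)) :
    ((SimplexCategory.σ ⟨jv, hj⟩).toOrderHom i).val =
      if jv < i.val then i.val - 1 else i.val := by
  dsimp [SimplexCategory.σ, Fin.predAboveOrderHom]
  unfold Fin.predAbove
  split <;> rename_i h
  · rw [if_pos (by simpa [Fin.lt_def] using h), Fin.coe_pred]
  · rw [if_neg (by simpa [Fin.lt_def] using h), Fin.coe_castPred]

lemma sigmaIter_apply (k : ℕ) : ∀ (p d : ℕ) (h : k ≤ p)
    (i : Fin ((⦋p + d⦌ : SimplexCategory).len + 1)),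
    ((sigmaIter k p d h).toOrderHom i).val = min i.val (max k (i.val - d)) := fun p d h i => match p, d, h, i with
  | p, 0, h, i => by
    have hb : ((sigmaIter k p 0 h).toOrderHom i).val = i.val := rfl
    have hi := i.isLt
    simp only [SimplexCategory.len_mk] at hi
    rw [hb]; omega
  | p, d + 1, h, i => by
    have hb : ((sigmaIter k p (d + 1) h).toOrderHom i).val
        = ((sigmaIter k p d h).toOrderHom
            ((SimplexCategory.σ (n := p + d)
              ⟨k + d, Nat.lt_succ_of_le (Nat.add_le_add_right h d)⟩).toOrderHom i)).val := rfl
    have hr := sigmaIter_apply k p d h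
      ((SimplexCategory.σ (n := p + d)
        ⟨k + d, Nat.lt_succ_of_le (Nat.add_le_add_right h d)⟩).toOrderHom i)
    have hs := sigma_val (n := p + d) (k + d) (Nat.lt_succ_of_le (Nat.add_le_add_right h d)) i
    have hi := i.isLt
    simp only [SimplexCategory.len_mk] at hi
    rw [hb, hr]
    split_ifs at hs <;> omega

/-- The section of `sigmaIter`. -/
def gmap (k p d : ℕ) (i : Fin (p + 1)) : Fin (p + d + 1) :=
  if i.val ≤ k then ⟨i.val, by have := i.isLt; omega⟩ else ⟨i.val + d, by have := i.isLt; omega⟩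

lemma gmap_val (k p d : ℕ) (i : Fin (p + 1)) :
    (gmap k p d i).val = if i.val ≤ k then i.val else i.val + d := by
  rw [gmap]; split <;> rfl

/-- Let `X` be a non-singular simplicial set and `x` an `n`-simplex
of `X` with `x ε_k = x ε_l` for some `k < l ≤ n`.  Then the degenerate part `x♭`
of `x` (i.e. the epi `ρ` in the unique Eilenberg–Zilber factorization
`x = (x♯) ρ` with `x♯` non-degenerate) factors uniquely through the degeneracy
operator `σ_k ∘ ⋯ ∘ σ_{l-1} : [n] → [n-(l-k)]`.  Here we write `n = p + d` and
`l = k + d` with `0 < d` and `k ≤ p`, so that `n - (l - k) = p`. -/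
theorem degenerate_part_factors (X : SSet.{0}) (hX : X.NonSingular)
    (k p d : ℕ) (hd : 0 < d) (hk : k ≤ p) (x : X _⦋p + d⦌)
    (hx : X.vert x ⟨k, by omega⟩ = X.vert x ⟨k + d, by omega⟩)
    (m : ℕ) (y : X _⦋m⦌) (hy : ¬ X.IsDegenerate y)
    (ρ : (⦋p + d⦌ : SimplexCategory) ⟶ ⦋m⦌)
    (hρ : Function.Surjective ρ.toOrderHom) (hxy : X.map ρ.op y = x) :
    ∃! τ : (⦋p⦌ : SimplexCategory) ⟶ ⦋m⦌, ρ = sigmaIter k p d hk ≫ τ := by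
  have hinj := hX m y hy (op ⦋0⦌)
  have hlk : k < (⦋p + d⦌ : SimplexCategory).len + 1 := by
    simp only [SimplexCategory.len_mk]; omega
  have hlkd : k + d < (⦋p + d⦌ : SimplexCategory).len + 1 := by
    simp only [SimplexCategory.len_mk]; omega
  -- ρ takes the same value at k and k+d
  have hconst : ρ.toOrderHom ⟨k, hlk⟩ = ρ.toOrderHom ⟨k + d, hlkd⟩ := by
    have h1 : X.map (SimplexCategory.const ⦋0⦌ ⦋m⦌ (ρ.toOrderHom ⟨k, hlk⟩)).op y
        = X.map (SimplexCategory.const ⦋0⦌ ⦋m⦌ (ρ.toOrderHom ⟨k + d, hlkd⟩)).op y := by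
      have e1 := congrArg (X.map (SimplexCategory.const ⦋0⦌ ⦋p+d⦌ ⟨k, hlk⟩).op) hxy
      have e2 := congrArg (X.map (SimplexCategory.const ⦋0⦌ ⦋p+d⦌ ⟨k + d, hlkd⟩).op) hxy
      rw [← FunctorToTypes.map_comp_apply, ← op_comp, SimplexCategory.const_comp] at e1 e2
      rw [e1, e2]
      exact hx
    have h2 := hinj (a₁ := ULift.up (SimplexCategory.const ⦋0⦌ ⦋m⦌ (ρ.toOrderHom ⟨k, hlk⟩)))
      (a₂ := ULift.up (SimplexCategory.const ⦋0⦌ ⦋m⦌ (ρ.toOrderHom ⟨k + d, hlkd⟩))) h1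
    exact congrArg (fun f => SimplexCategory.Hom.toOrderHom (ULift.down f) 0) h2
  have hmono : Monotone (fun i => ρ.toOrderHom (gmap k p d i)) := by
    intro i j hij
    have hij' : i.val ≤ j.val := hij
    rcases le_or_gt j.val k with hj | hj
    · exact ρ.toOrderHom.monotone (by
        rw [Fin.le_def, gmap_val, gmap_val, if_pos (le_trans hij' hj), if_pos hj]; exact hij')
    rcases le_or_gt i.val k with hi | hi
    · have l1 : ρ.toOrderHom (gmap k p d i) ≤ ρ.toOrderHom ⟨k, hlk⟩ :=
        ρ.toOrderHom.monotone (by rw [Fin.le_def, gmap_val, if_pos hi]; exact hi)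
      have l2 : ρ.toOrderHom ⟨k + d, hlkd⟩ ≤ ρ.toOrderHom (gmap k p d j) :=
        ρ.toOrderHom.monotone (by
          rw [Fin.le_def, gmap_val, if_neg (not_le.mpr hj)]; show k + d ≤ j.val + d; omega)
      exact le_trans l1 (hconst ▸ l2)
    · exact ρ.toOrderHom.monotone (by
        rw [Fin.le_def, gmap_val, gmap_val, if_neg (not_le.mpr hi), if_neg (not_le.mpr hj)]
        omega)
  set τ : (⦋p⦌ : SimplexCategory) ⟶ ⦋m⦌ :=
    SimplexCategory.Hom.mk ⟨fun i => ρ.toOrderHom (gmap k p d i), hmono⟩ with hτ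
  have hτval : ∀ i : Fin (p + 1), τ.toOrderHom i = ρ.toOrderHom (gmap k p d i) := fun _ => rfl
  -- ρ is constant on [k, k+d]
  have hconst' : ∀ i : Fin (p + d + 1), k ≤ i.val → i.val ≤ k + d →
      ρ.toOrderHom i = ρ.toOrderHom ⟨k, hlk⟩ := by
    intro i h1 h2
    refine le_antisymm ?_ (ρ.toOrderHom.monotone (by rw [Fin.le_def]; exact h1))
    rw [hconst]
    exact ρ.toOrderHom.monotone (by rw [Fin.le_def]; exact h2)
  have hfac : ρ = sigmaIter k p d hk ≫ τ := by
    apply SimplexCategory.Hom.ext'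
    apply OrderHom.ext
    funext i
    rw [SimplexCategory.comp_toOrderHom, OrderHom.comp_coe, Function.comp_apply, hτval]
    have hs := sigmaIter_apply k p d hk i
    have hi := i.isLt
    simp only [SimplexCategory.len_mk] at hi
    rcases le_or_gt i.val k with h1 | h1
    · have : gmap k p d ((sigmaIter k p d hk).toOrderHom i) = i := by
        apply Fin.ext; rw [gmap_val]; rw [if_pos (by omega)]; omega
      rw [this]
    · rcases le_or_gt i.val (k + d) with h2 | h2
      · have : gmap k p d ((sigmaIter k p d hk).toOrderHom i) = (⟨k, hlk⟩ : Fin (p + d + 1)) := by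
          apply Fin.ext; rw [gmap_val]; rw [if_pos (by omega)]
          show ((sigmaIter k p d hk).toOrderHom i).val = k
          omega
        rw [this, hconst' i (by omega) h2]
      · have : gmap k p d ((sigmaIter k p d hk).toOrderHom i) = i := by
          apply Fin.ext; rw [gmap_val]; rw [if_neg (by omega)]; omega
        rw [this]
  refine ⟨τ, hfac, ?_⟩
  intro τ' hτ'
  have hsec : ∀ j : Fin (p + 1), (sigmaIter k p d hk).toOrderHom (gmap k p d j) = j := by
    intro j
    apply Fin.ext
    have hs := sigmaIter_apply k p d hk (gmap k p d j)
    have hgv := gmap_val k p d j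
    have hj := j.isLt
    split at hgv <;> omega
  apply SimplexCategory.Hom.ext'
  apply OrderHom.ext
  funext j
  have e1 : ρ.toOrderHom (gmap k p d j) = τ'.toOrderHom ((sigmaIter k p d hk).toOrderHom (gmap k p d j)) := by
    rw [hτ']; rfl
  rw [hsec] at e1
  show τ'.toOrderHom j = τ.toOrderHom j
  rw [hτval, e1]
end

section
/- In a non-singular simplicial set, a simplex is non-degenerate if and only if its vertices are pairwise distinct. -/
open CategoryTheory Simplicial Opposite MonoidalCategory Limits

/-- In a non-singular simplicial set, a simplex is non-degenerate
if and only if its vertices are pairwise distinct. -/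
theorem nondegenerate_iff_vertices_injective (X : SSet.{0}) (hX : X.NonSingular)
    {n : ℕ} (x : X _⦋n⦌) :
    ¬ X.IsDegenerate x ↔ Function.Injective (X.vert x) := by
  constructor
  · intro hnd i j h
    have hinj := hX n x hnd (op ⦋0⦌)
    have key : (SSet.stdSimplex.objEquiv (n := ⦋n⦌) (m := op ⦋0⦌)).symm
          (SimplexCategory.const ⦋0⦌ ⦋n⦌ i)
        = (SSet.stdSimplex.objEquiv (n := ⦋n⦌) (m := op ⦋0⦌)).symm
          (SimplexCategory.const ⦋0⦌ ⦋n⦌ j) := by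
      apply hinj
      exact h
    have := (SSet.stdSimplex.objEquiv (n := ⦋n⦌) (m := op ⦋0⦌)).symm.injective.eq_iff.mp key
    exact congrArg (fun f => f.toOrderHom 0) this
  · rintro hv ⟨m, hm, α, y, rfl⟩
    have hni : ¬ Function.Injective α.toOrderHom := by
      intro hinj
      have := Fintype.card_le_of_injective _ hinj
      simp [SimplexCategory.len_mk] at this
      omega
    simp only [Function.Injective, not_forall] at hni
    obtain ⟨i, j, hij, hne⟩ := hni
    apply hne
    apply hv
    show X.map _ (X.map _ y) = X.map _ (X.map _ y)
    rw [← FunctorToTypes.map_comp_apply, ← FunctorToTypes.map_comp_apply,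
      ← op_comp, ← op_comp, SimplexCategory.const_comp, SimplexCategory.const_comp, hij]
end

section
/- Let X be a non-singular simplicial set and Φ an n-simplex of the simplicial mapping set X^{Δ[1]} with Φε_k = Φε_l for some 0 ≤ k < l ≤ n. Then Φε_j = Φε_k for all k ≤ j ≤ l. -/
open CategoryTheory Simplicial Opposite MonoidalCategory Limits

/-- The simplicial mapping set `X^K`, whose `n`-simplices are the simplicial
maps `Δ[n] × K → X`. -/
noncomputable def SSet.sHom (K X : SSet.{0}) : SSet.{0} where
  obj m := SSet.stdSimplex.obj m.unop ⊗ K ⟶ X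
  map α := TypeCat.ofHom fun f => (SSet.stdSimplex.map α.unop ▷ K) ≫ f
  map_id m := by
    ext f : 3
    erw [CategoryTheory.Functor.map_id]; simp
  map_comp α β := by
    ext f : 3
    erw [CategoryTheory.Functor.map_comp]; simp [MonoidalCategory.comp_whiskerRight]
namespace VEB
open SimplexCategory

variable {X : SSet.{0}}

lemma map_map {n m p : ℕ} (α : (⦋n⦌ : SimplexCategory) ⟶ ⦋m⦌)
    (β : (⦋p⦌ : SimplexCategory) ⟶ ⦋n⦌) (x : X _⦋m⦌) :
    X.map β.op (X.map α.op x) = X.map (β ≫ α).op x := by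
  rw [op_comp, FunctorToTypes.map_comp_apply]

lemma vert_map {n m : ℕ} (α : (⦋n⦌ : SimplexCategory) ⟶ ⦋m⦌) (y : X _⦋m⦌) (i : Fin (n + 1)) :
    X.vert (X.map α.op y) i = X.vert y (α.toOrderHom i) := by
  dsimp only [SSet.vert]
  rw [map_map, const_comp]

lemma isDeg_of_vert_eq (hX : X.NonSingular) {n : ℕ} (x : X _⦋n⦌) {i j : Fin (n + 1)}
    (hij : i ≠ j) (h : X.vert x i = X.vert x j) : X.IsDegenerate x := by
  by_contra hd
  have hinj := hX n x hd (op ⦋0⦌)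
  have h2 : (SSet.stdSimplex.const n i (op ⦋0⦌)) = SSet.stdSimplex.const n j (op ⦋0⦌) :=
    hinj h
  apply hij
  have := congrArg (fun z => (SSet.stdSimplex.objEquiv (n := ⦋n⦌) (m := op ⦋0⦌) z).toOrderHom 0) h2
  exact this

/-- structure of a degenerate 2-simplex -/
lemma deg_two_struct (z : X _⦋2⦌) (hd : X.IsDegenerate z) :
    ∃ (m : ℕ) (α : (⦋2⦌ : SimplexCategory) ⟶ ⦋m⦌) (y : X _⦋m⦌),
      X.map α.op y = z ∧
        (α.toOrderHom 1 = α.toOrderHom 0 ∨ α.toOrderHom 1 = α.toOrderHom 2) := by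
  obtain ⟨m, hm, α, y, hy⟩ := hd
  refine ⟨m, α, y, hy, ?_⟩
  have h01 : (α.toOrderHom 0).1 ≤ (α.toOrderHom 1).1 := α.toOrderHom.monotone (by decide)
  have h12 : (α.toOrderHom 1).1 ≤ (α.toOrderHom 2).1 := α.toOrderHom.monotone (by decide)
  have hb : (α.toOrderHom 1).1 < m + 1 := (α.toOrderHom 1).2
  have hc : (α.toOrderHom 2).1 < m + 1 := (α.toOrderHom 2).2
  rw [Fin.ext_iff, Fin.ext_iff]
  omega

lemma deg_two_verts (z : X _⦋2⦌) (hd : X.IsDegenerate z) :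
    X.vert z 1 = X.vert z 0 ∨ X.vert z 1 = X.vert z 2 := by
  obtain ⟨m, α, y, rfl, hα⟩ := deg_two_struct _ hd
  rcases hα with h | h <;> [left; right] <;>
    simp only [vert_map, h]

lemma deg_two_faces (z : X _⦋2⦌) (hd : X.IsDegenerate z) :
    X.map (δ (0 : Fin 3)).op z = X.map (δ (1 : Fin 3)).op z ∨
      X.map (δ (1 : Fin 3)).op z = X.map (δ (2 : Fin 3)).op z := by
  obtain ⟨m, α, y, rfl, hα⟩ := deg_two_struct _ hd
  rcases hα with h | h
  · left
    rw [map_map, map_map]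
    have heq : δ (0 : Fin 3) ≫ α = δ (1 : Fin 3) ≫ α := by
      apply SimplexCategory.Hom.ext_one_left
      · show α.toOrderHom ((δ (0:Fin 3)).toOrderHom 0) = α.toOrderHom ((δ (1:Fin 3)).toOrderHom 0)
        rw [show (δ (0:Fin 3)).toOrderHom 0 = 1 from rfl,
          show (δ (1:Fin 3)).toOrderHom 0 = 0 from rfl, h]
      · rfl
    rw [heq]
  · right
    rw [map_map, map_map]
    have heq : δ (1 : Fin 3) ≫ α = δ (2 : Fin 3) ≫ α := by
      apply SimplexCategory.Hom.ext_one_left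
      · rfl
      · show α.toOrderHom ((δ (1:Fin 3)).toOrderHom 1) = α.toOrderHom ((δ (2:Fin 3)).toOrderHom 1)
        rw [show (δ (1:Fin 3)).toOrderHom 1 = 2 from rfl,
          show (δ (2:Fin 3)).toOrderHom 1 = 1 from rfl, h]
    rw [heq]

lemma vert_zero (y : X _⦋0⦌) (i : Fin 1) : X.vert y i = y := by
  dsimp only [SSet.vert]
  have : const ⦋0⦌ ⦋0⦌ i = 𝟙 (⦋0⦌ : SimplexCategory) := by
    apply Hom.ext_zero_left
    exact Subsingleton.elim (α := Fin 1) _ _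
  rw [this]
  exact FunctorToTypes.map_id_apply X y

/-- a nondegenerate edge with equal endpoints is constant -/
lemma edge_const (hX : X.NonSingular) (e : X _⦋1⦌) (h : X.vert e 0 = X.vert e 1) :
    e = X.map (σ (0 : Fin 1)).op (X.vert e 0) := by
  obtain ⟨m, hm, α, y, hy⟩ := isDeg_of_vert_eq hX e (by decide) h
  obtain rfl : m = 0 := by omega
  obtain rfl : α = σ (0 : Fin 1) := (eq_const_to_zero α).trans (eq_const_to_zero _).symm
  rw [← hy, vert_map, vert_zero]


open SimplexCategory

variable {X : SSet.{0}} {n : ℕ}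

abbrev toHom (Φ : (SSet.sHom Δ[1] X) _⦋n⦌) : Δ[n] ⊗ Δ[1] ⟶ X := Φ

abbrev toHom0 (f : (SSet.sHom Δ[1] X) _⦋0⦌) : Δ[0] ⊗ Δ[1] ⟶ X := f

def ψ (Φ : (SSet.sHom Δ[1] X) _⦋n⦌) {m : ℕ} (a : (⦋m⦌ : SimplexCategory) ⟶ ⦋n⦌)
    (b : (⦋m⦌ : SimplexCategory) ⟶ ⦋1⦌) : X _⦋m⦌ :=
  (toHom Φ).app (op ⦋m⦌) ⟨(SSet.stdSimplex.objEquiv).symm a,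
    (SSet.stdSimplex.objEquiv).symm b⟩

lemma ψ_map (Φ : (SSet.sHom Δ[1] X) _⦋n⦌) {m p : ℕ} (a : (⦋m⦌ : SimplexCategory) ⟶ ⦋n⦌)
    (b : (⦋m⦌ : SimplexCategory) ⟶ ⦋1⦌) (γ : (⦋p⦌ : SimplexCategory) ⟶ ⦋m⦌) :
    X.map γ.op (ψ Φ a b) = ψ Φ (γ ≫ a) (γ ≫ b) := by
  dsimp only [ψ]
  exact (NatTrans.naturality_apply (toHom Φ) γ.op _).symm

lemma vert_ψ (Φ : (SSet.sHom Δ[1] X) _⦋n⦌) {m : ℕ} (a : (⦋m⦌ : SimplexCategory) ⟶ ⦋n⦌)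
    (b : (⦋m⦌ : SimplexCategory) ⟶ ⦋1⦌) (i : Fin (m + 1)) :
    X.vert (ψ Φ a b) i = ψ Φ (const ⦋0⦌ ⦋n⦌ (a.toOrderHom i)) (const ⦋0⦌ ⦋1⦌ (b.toOrderHom i)) := by
  dsimp only [SSet.vert]
  rw [show (const ⦋0⦌ ⦋m⦌ i).op = (const ⦋0⦌ ⦋m⦌ i).op from rfl, ψ_map, const_comp, const_comp]

lemma vert_sHom_eq_iff (Φ : (SSet.sHom Δ[1] X) _⦋n⦌) (i i' : Fin (n + 1)) :
    (SSet.sHom Δ[1] X).vert Φ i = (SSet.sHom Δ[1] X).vert Φ i' ↔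
      ψ Φ (const ⦋1⦌ ⦋n⦌ i) (𝟙 (⦋1⦌ : SimplexCategory)) = ψ Φ (const ⦋1⦌ ⦋n⦌ i') (𝟙 (⦋1⦌ : SimplexCategory)) := by
  have key : ∀ (j : Fin (n + 1)) (p : ℕ) (x : (Δ[0] ⊗ Δ[1]).obj (op (⦋p⦌ : SimplexCategory))),
      (toHom0 ((SSet.sHom Δ[1] X).vert Φ j)).app (op ⦋p⦌) x =
        X.map (SSet.stdSimplex.objEquiv (n := ⦋1⦌) (m := op ⦋p⦌) x.2).op
          (ψ Φ (const ⦋1⦌ ⦋n⦌ j) (𝟙 (⦋1⦌ : SimplexCategory))) := by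
    intro j p x
    rw [ψ_map, Category.comp_id,
      show (SSet.stdSimplex.objEquiv (n := ⦋1⦌) (m := op ⦋p⦌) x.2) ≫ const ⦋1⦌ ⦋n⦌ j
          = const ⦋p⦌ ⦋n⦌ j by ext j'; rfl]
    rfl
  constructor
  · intro h
    have := congrArg (fun f => (toHom0 f).app (op (SimplexCategory.mk 1))
      ⟨(SSet.stdSimplex.objEquiv).symm (SimplexCategory.const (SimplexCategory.mk 1) (SimplexCategory.mk 0) 0),
        (SSet.stdSimplex.objEquiv).symm (𝟙 (⦋1⦌ : SimplexCategory))⟩) h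
    dsimp only at this
    erw [key i, key i'] at this
    simpa using this
  · intro h
    show toHom0 _ = toHom0 _
    apply NatTrans.ext
    funext m
    ext x
    obtain ⟨p, rfl⟩ : ∃ p : ℕ, m = op (⦋p⦌ : SimplexCategory) :=
      ⟨m.unop.len, by rw [SimplexCategory.mk_len]⟩
    exact (key i p x).trans ((congrArg _ h).trans (key i' p x).symm)

end VEB
section MainPart
namespace VEB
open SimplexCategory

theorem main (X : SSet.{0}) (hX : X.NonSingular) {n : ℕ}
    (Φ : (SSet.sHom Δ[1] X) _⦋n⦌) (k l : Fin (n + 1)) (hkl : k ≤ l)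
    (h : ψ Φ (const ⦋1⦌ ⦋n⦌ k) (𝟙 (⦋1⦌ : SimplexCategory))
        = ψ Φ (const ⦋1⦌ ⦋n⦌ l) (𝟙 (⦋1⦌ : SimplexCategory)))
    (j : Fin (n + 1)) (hkj : k ≤ j) (hjl : j ≤ l) :
    ψ Φ (const ⦋1⦌ ⦋n⦌ j) (𝟙 (⦋1⦌ : SimplexCategory))
      = ψ Φ (const ⦋1⦌ ⦋n⦌ k) (𝟙 (⦋1⦌ : SimplexCategory)) := by
  classical
  set V : Fin (n + 1) → Fin 2 → X _⦋0⦌ :=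
    fun r s => ψ Φ (const ⦋0⦌ ⦋n⦌ r) (const ⦋0⦌ ⦋1⦌ s) with hV
  have hvx : ∀ (i : Fin (n + 1)) (t : Fin 2),
      X.vert (ψ Φ (const ⦋1⦌ ⦋n⦌ i) (𝟙 (⦋1⦌ : SimplexCategory))) t = V i t := by
    intro i t
    rw [vert_ψ]
    rfl
  -- endpoints agree
  have hV0 : V l 0 = V k 0 := by
    have := congrArg (fun z => X.vert z 0) h
    rw [hvx, hvx] at this
    exact this.symm
  have hV1 : V l 1 = V k 1 := by
    have := congrArg (fun z => X.vert z 1) h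
    rw [hvx, hvx] at this
    exact this.symm
  -- intermediate vertices agree
  have hVj1 : V j 1 = V k 1 := by
    set T := ψ Φ (mkOfLeComp k j l hkj hjl) (const ⦋2⦌ ⦋1⦌ 1) with hT
    have hv0 : X.vert T 0 = V k 1 := by rw [hT, vert_ψ]; rfl
    have hv1 : X.vert T 1 = V j 1 := by rw [hT, vert_ψ]; rfl
    have hv2 : X.vert T 2 = V l 1 := by rw [hT, vert_ψ]; rfl
    have hdeg : X.IsDegenerate T :=
      isDeg_of_vert_eq hX T (show (0 : Fin 3) ≠ 2 by decide)
        (by rw [hv0, hv2, hV1])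
    rcases deg_two_verts T hdeg with hc | hc
    · rw [hv1, hv0] at hc; exact hc
    · rw [hv1, hv2] at hc; rw [hc, hV1]
  have hVj0 : V j 0 = V k 0 := by
    set T := ψ Φ (mkOfLeComp k j l hkj hjl) (const ⦋2⦌ ⦋1⦌ 0) with hT
    have hv0 : X.vert T 0 = V k 0 := by rw [hT, vert_ψ]; rfl
    have hv1 : X.vert T 1 = V j 0 := by rw [hT, vert_ψ]; rfl
    have hv2 : X.vert T 2 = V l 0 := by rw [hT, vert_ψ]; rfl
    have hdeg : X.IsDegenerate T :=
      isDeg_of_vert_eq hX T (show (0 : Fin 3) ≠ 2 by decide)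
        (by rw [hv0, hv2, hV0])
    rcases deg_two_verts T hdeg with hc | hc
    · rw [hv1, hv0] at hc; exact hc
    · rw [hv1, hv2] at hc; rw [hc, hV0]
  by_cases hpq : V k 0 = V k 1
  · -- the edge is constant
    have hj : X.vert (ψ Φ (const ⦋1⦌ ⦋n⦌ j) (𝟙 (⦋1⦌ : SimplexCategory))) 0
        = X.vert (ψ Φ (const ⦋1⦌ ⦋n⦌ j) (𝟙 (⦋1⦌ : SimplexCategory))) 1 := by
      rw [hvx, hvx, hVj0, hVj1, hpq]
    have hk' : X.vert (ψ Φ (const ⦋1⦌ ⦋n⦌ k) (𝟙 (⦋1⦌ : SimplexCategory))) 0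
        = X.vert (ψ Φ (const ⦋1⦌ ⦋n⦌ k) (𝟙 (⦋1⦌ : SimplexCategory))) 1 := by
      rw [hvx, hvx, hpq]
    rw [edge_const hX _ hj, edge_const hX _ hk', hvx, hvx, hVj0]
  · -- main case
    set A := ψ Φ (mkOfLeComp k j j hkj le_rfl) (σ 0) with hA
    have hAv0 : X.vert A 0 = V k 0 := by rw [hA, vert_ψ]; rfl
    have hAv1 : X.vert A 1 = V j 0 := by rw [hA, vert_ψ]; rfl
    have hdegA : X.IsDegenerate A :=
      isDeg_of_vert_eq hX A (show (0 : Fin 3) ≠ 1 by decide)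
        (by rw [hAv0, hAv1, hVj0])
    have hfA := deg_two_faces A hdegA
    rw [hA] at hfA
    simp only [ψ_map] at hfA
    rw [show δ (0 : Fin 3) ≫ mkOfLeComp k j j hkj le_rfl = const ⦋1⦌ ⦋n⦌ j by
        apply SimplexCategory.Hom.ext_one_left <;> rfl,
      show δ (0 : Fin 3) ≫ σ (0 : Fin 2) = 𝟙 (⦋1⦌ : SimplexCategory) by
        apply SimplexCategory.Hom.ext_one_left <;> rfl,
      show δ (1 : Fin 3) ≫ mkOfLeComp k j j hkj le_rfl = mkOfLe k j hkj by
        apply SimplexCategory.Hom.ext_one_left <;> rfl,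
      show δ (1 : Fin 3) ≫ σ (0 : Fin 2) = 𝟙 (⦋1⦌ : SimplexCategory) by
        apply SimplexCategory.Hom.ext_one_left <;> rfl,
      show δ (2 : Fin 3) ≫ mkOfLeComp k j j hkj le_rfl = mkOfLe k j hkj by
        apply SimplexCategory.Hom.ext_one_left <;> rfl,
      show δ (2 : Fin 3) ≫ σ (0 : Fin 2) = const ⦋1⦌ ⦋1⦌ 0 by
        apply SimplexCategory.Hom.ext_one_left <;> rfl] at hfA
    rcases hfA with hfA | hfA
    · -- x_j = y_j
      set F := ψ Φ (mkOfLeComp k k j le_rfl hkj) (σ 1) with hF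
      have hFv1 : X.vert F 1 = V k 1 := by rw [hF, vert_ψ]; rfl
      have hFv2 : X.vert F 2 = V j 1 := by rw [hF, vert_ψ]; rfl
      have hdegF : X.IsDegenerate F :=
        isDeg_of_vert_eq hX F (show (1 : Fin 3) ≠ 2 by decide)
          (by rw [hFv1, hFv2, hVj1])
      have hfF := deg_two_faces F hdegF
      rw [hF] at hfF
      simp only [ψ_map] at hfF
      rw [show δ (0 : Fin 3) ≫ mkOfLeComp k k j le_rfl hkj = mkOfLe k j hkj by
          apply SimplexCategory.Hom.ext_one_left <;> rfl,
        show δ (0 : Fin 3) ≫ σ (1 : Fin 2) = const ⦋1⦌ ⦋1⦌ 1 by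
          apply SimplexCategory.Hom.ext_one_left <;> rfl,
        show δ (1 : Fin 3) ≫ mkOfLeComp k k j le_rfl hkj = mkOfLe k j hkj by
          apply SimplexCategory.Hom.ext_one_left <;> rfl,
        show δ (1 : Fin 3) ≫ σ (1 : Fin 2) = 𝟙 (⦋1⦌ : SimplexCategory) by
          apply SimplexCategory.Hom.ext_one_left <;> rfl,
        show δ (2 : Fin 3) ≫ mkOfLeComp k k j le_rfl hkj = const ⦋1⦌ ⦋n⦌ k by
          apply SimplexCategory.Hom.ext_one_left <;> rfl,
        show δ (2 : Fin 3) ≫ σ (1 : Fin 2) = 𝟙 (⦋1⦌ : SimplexCategory) by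
          apply SimplexCategory.Hom.ext_one_left <;> rfl] at hfF
      rcases hfF with hfF | hfF
      · -- t' = y_j gives a contradiction V k 1 = V k 0
        exfalso
        apply hpq
        have h2 := congrArg (fun z => X.vert z 0) hfF
        rw [vert_ψ, vert_ψ] at h2
        exact h2.symm
      · -- y_j = x_k
        rw [hfA, hfF]
    · -- y_j = u gives a contradiction
      exfalso
      apply hpq
      have h2 := congrArg (fun z => X.vert z 1) hfA
      rw [vert_ψ, vert_ψ] at h2
      -- h2 : V j 1 = V j 0
      rw [← hVj0, ← hVj1]
      exact h2.symm

end VEB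
end MainPart

/-- Let `X` be a non-singular simplicial set and `Φ` an
`n`-simplex of the simplicial mapping set `X^{Δ[1]}` with `Φ ε_k = Φ ε_l` for
some `0 ≤ k < l ≤ n`.  Then `Φ ε_j = Φ ε_k` for all `k ≤ j ≤ l`. -/
theorem vert_eq_of_between (X : SSet.{0}) (hX : X.NonSingular) {n : ℕ}
    (Φ : (SSet.sHom Δ[1] X) _⦋n⦌) (k l : Fin (n + 1)) (hkl : k < l)
    (h : (SSet.sHom Δ[1] X).vert Φ k = (SSet.sHom Δ[1] X).vert Φ l) :
    ∀ j : Fin (n + 1), k ≤ j → j ≤ l →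
      (SSet.sHom Δ[1] X).vert Φ j = (SSet.sHom Δ[1] X).vert Φ k := by
  
  intro j hkj hjl
  rw [VEB.vert_sHom_eq_iff] at h ⊢
  exact VEB.main X hX Φ k l hkl.le h j hkj hjl
end

section
/- The category of non-singular simplicial sets does not admit a subobject classifier: there is no non-singular simplicial set Ω with a map t : Δ[0] → Ω classifying monomorphisms, because Ω would have exactly two vertices, hence be at most 1-dimensional, and could not classify the subobjects of Δ[2]. -/
open CategoryTheory Simplicial Opposite MonoidalCategory Limits
open CategoryTheory.GrothendieckTopology SimplexCategory

/-- The category of non-singular simplicial sets, as a full subcategory of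
`SSet`. -/
abbrev NsSet : Type 1 := CategoryTheory.ObjectProperty.FullSubcategory SSet.NonSingular

lemma isDeg_iff (X : SSet.{0}) {n : ℕ} (x : X _⦋n+1⦌) :
    X.IsDegenerate x ↔ ∃ j : Fin (n+1),
      X.map (σ j).op (X.map (δ j.castSucc).op x) = x := by
  constructor
  · rintro ⟨m, hm, α, y, rfl⟩
    have hni : ¬ Function.Injective α.toOrderHom := by
      intro h
      have := Fintype.card_le_of_injective _ h
      simp only [SimplexCategory.len_mk, Fintype.card_fin] at this
      omega
    obtain ⟨j, β, hβ⟩ := eq_σ_comp_of_not_injective α hni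
    have key : σ j ≫ δ j.castSucc ≫ α = α := by
      rw [hβ, ← Category.assoc (δ j.castSucc) (σ j) β, δ_comp_σ_self, Category.id_comp]
    refine ⟨j, ?_⟩
    rw [← FunctorToTypes.map_comp_apply, ← FunctorToTypes.map_comp_apply,
      ← op_comp, ← op_comp, Category.assoc, key]
  · rintro ⟨j, hj⟩
    exact ⟨n, Nat.lt_succ_self n, σ j, X.map (δ j.castSucc).op x, hj⟩

def ssetOfSub {X : SSet.{0}} (S : Subfunctor X) : SSet.{0} := S.toFunctor

lemma isDeg_sub_iff {X : SSet.{0}} (S : Subfunctor X) {n : ℕ}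
    (x : ssetOfSub S _⦋n⦌) :
    (ssetOfSub S).IsDegenerate x ↔ X.IsDegenerate x.1 := by
  cases n with
  | zero =>
    constructor <;> rintro ⟨m, hm, _⟩ <;> exact absurd hm (Nat.not_lt_zero m)
  | succ n =>
    rw [isDeg_iff, isDeg_iff]
    constructor
    · rintro ⟨j, hj⟩
      exact ⟨j, congrArg Subtype.val hj⟩
    · rintro ⟨j, hj⟩
      refine ⟨j, Subtype.ext ?_⟩
      exact hj

lemma nonSingular_sub {X : SSet.{0}} (hX : X.NonSingular) (S : Subfunctor X) :
    (ssetOfSub S).NonSingular := by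
  intro n x hx
  have hx1 : ¬ X.IsDegenerate x.1 := fun h => hx ((isDeg_sub_iff S x).2 h)
  have hrep := hX n x.1 hx1
  intro m f g hfg
  apply hrep m
  show X.map (f.down).op x.1 = X.map (g.down).op x.1
  have : ((ssetOfSub S).map (f.down).op x).1 = ((ssetOfSub S).map (g.down).op x).1 :=
    congrArg Subtype.val hfg
  exact this

lemma nonSingular_std (n : ℕ) : SSet.NonSingular Δ[n] := by
  intro m x hx
  have hinj : Function.Injective x.down.toOrderHom := by
    cases m with
    | zero =>
      intro a b _
      have : Subsingleton (Fin ((unop (op (⦋0⦌:SimplexCategory))).len + 1)) := by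
        show Subsingleton (Fin 1); infer_instance
      exact Subsingleton.elim a b
    | succ k =>
      by_contra hni
      obtain ⟨j, β, hβ⟩ := eq_σ_comp_of_not_injective x.down hni
      apply hx
      refine ⟨k, Nat.lt_succ_self k, σ j,
        SSet.stdSimplex.objEquiv.symm β, ?_⟩
      rw [SSet.stdSimplex.map_apply, Equiv.apply_symm_apply]
      conv_rhs => rw [show x = SSet.stdSimplex.objEquiv.symm x.down from rfl, hβ]
      rfl
  intro m' f g hfg
  have h1 : f.down ≫ x.down = g.down ≫ x.down := by
    have := congrArg ULift.down hfg
    exact this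
  have h2 : (f.down : m'.unop ⟶ ⦋m⦌) = g.down := by
    apply SimplexCategory.Hom.ext
    apply OrderHom.ext
    funext i
    apply hinj
    calc x.down.toOrderHom (f.down.toOrderHom i)
        = (f.down ≫ x.down).toOrderHom i := rfl
      _ = (g.down ≫ x.down).toOrderHom i := by rw [h1]
      _ = _ := rfl
  exact ULift.down_injective h2

section Classifier

variable {Ωn : NsSet} [HasTerminal NsSet] (t : ⊤_ NsSet ⟶ Ωn)

/-- subobject of an NsSet object attached to a subpresheaf -/
def nsSub {B : NsSet} (S : Subfunctor B.obj) : NsSet :=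
  ⟨ssetOfSub S, nonSingular_sub B.property S⟩

def nsι {B : NsSet} (S : Subfunctor B.obj) : nsSub S ⟶ B := ObjectProperty.homMk S.ι

instance {B : NsSet} (S : Subfunctor B.obj) : Mono (nsι S) := by
  have : Mono ((ObjectProperty.ι SSet.NonSingular).map (nsι S)) := by
    show Mono S.ι
    infer_instance
  exact (ObjectProperty.ι SSet.NonSingular).mono_of_mono_map this

/-- the equalizer subpresheaf of χ and the "true" composite -/
def eqSub {B : NsSet} (χ : B ⟶ Ωn) : Subfunctor B.obj where
  obj m := {x | χ.hom.app m x = (terminal.from B ≫ t).hom.app m x}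
  map {U V} i x hx := by
    show χ.hom.app V (B.obj.map i x) = _
    rw [FunctorToTypes.naturality, hx, ← FunctorToTypes.naturality]

lemma key1 {B : NsSet} (χ : B ⟶ Ωn) :
    IsPullback (nsι (eqSub t χ)) (terminal.from (nsSub (eqSub t χ))) χ t := by
  have comm : nsι (eqSub t χ) ≫ χ = terminal.from (nsSub (eqSub t χ)) ≫ t := by
    have h0 : terminal.from (nsSub (eqSub t χ)) = nsι (eqSub t χ) ≫ terminal.from B :=
      Subsingleton.elim _ _
    rw [h0, Category.assoc]
    apply ObjectProperty.hom_ext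
    apply SSet.hom_ext
    intro m
    apply ConcreteCategory.hom_ext; intro x
    exact x.2
  apply IsPullback.of_isLimit' ⟨comm⟩
  apply PullbackCone.IsLimit.mk
  case lift =>
    intro s
    have hs : s.fst ≫ χ = s.fst ≫ terminal.from B ≫ t := by
      have h1 : s.snd = s.fst ≫ terminal.from B := Subsingleton.elim _ _
      rw [← Category.assoc, ← h1, s.condition]
    exact ObjectProperty.homMk
      { app := fun m => ↾fun y => ⟨s.fst.hom.app m y,
          by exact ConcreteCategory.congr_hom (congr_app (congrArg InducedCategory.Hom.hom hs) m) y⟩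
        naturality := by
          intro U V i
          apply ConcreteCategory.hom_ext; intro y
          apply Subtype.ext
          exact ConcreteCategory.congr_hom (s.fst.hom.naturality i) y }
  case fac_left => intro s; rfl
  case fac_right => intro s; exact Subsingleton.elim _ _
  case uniq =>
    intro s m' h1 _
    apply ObjectProperty.hom_ext
    apply SSet.hom_ext
    intro k
    apply ConcreteCategory.hom_ext; intro y
    apply Subtype.ext
    exact ConcreteCategory.congr_hom (congr_app (congrArg InducedCategory.Hom.hom h1) k) y

lemma key2 {U B : NsSet} {m : U ⟶ B} {χ : B ⟶ Ωn}
    (h : IsPullback m (terminal.from U) χ t) :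
    ∀ (k : SimplexCategoryᵒᵖ) (x : B.obj.obj k),
      x ∈ (eqSub t χ).obj k ↔ ∃ u : U.obj.obj k, m.hom.app k u = x := by
  intro k x
  have h' := key1 t χ
  let e := h.isoIsPullback _ _ h'
  have he : e.hom ≫ nsι (eqSub t χ) = m := h.isoIsPullback_hom_fst _ _ h'
  constructor
  · intro hx
    refine ⟨e.inv.hom.app k ⟨x, hx⟩, ?_⟩
    have : e.inv ≫ m = nsι (eqSub t χ) := by rw [← he, Iso.inv_hom_id_assoc]
    exact ConcreteCategory.congr_hom (congr_app (congrArg InducedCategory.Hom.hom this) k) ⟨x, hx⟩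
  · rintro ⟨u, rfl⟩
    have : m.hom.app k u = (nsι (eqSub t χ)).hom.app k (e.hom.hom.app k u) :=
      (ConcreteCategory.congr_hom (congr_app (congrArg InducedCategory.Hom.hom he) k) u).symm
    rw [this]
    exact (e.hom.hom.app k u).2

end Classifier

section Std

/-- standard simplices as objects of NsSet -/
def stdNs (n : ℕ) : NsSet := ⟨Δ[n], nonSingular_std n⟩

lemma const_map_eq {n : ℕ} {U V : SimplexCategoryᵒᵖ} (i : U ⟶ V) (k : Fin (n+1)) :
    Δ[n].map i (SSet.stdSimplex.const n k U) = SSet.stdSimplex.const n k V := rfl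

lemma const_mem_iff {n : ℕ} (S : Subfunctor (Δ[n] : SSet.{0})) (k : Fin (n+1))
    (U : SimplexCategoryᵒᵖ) :
    SSet.stdSimplex.const n k U ∈ S.obj U ↔
      SSet.stdSimplex.const n k (op ⦋0⦌) ∈ S.obj (op ⦋0⦌) := by
  constructor
  · intro h
    have := S.map (SimplexCategory.const ⦋0⦌ U.unop 0).op h
    rwa [Set.mem_preimage, const_map_eq] at this
  · intro h
    have := S.map (SimplexCategory.const U.unop ⦋0⦌ 0).op h
    rwa [Set.mem_preimage, const_map_eq] at this

lemma eq_const_zero (U : SimplexCategoryᵒᵖ) (x : (Δ[0] : SSet.{0}).obj U) :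
    x = SSet.stdSimplex.const 0 0 U := by
  apply ULift.down_injective
  apply SimplexCategory.Hom.ext
  apply OrderHom.ext
  funext j
  exact Subsingleton.elim (α := Fin 1) _ _

lemma sub0_inj : Function.Injective
    (fun S : Subfunctor (Δ[0] : SSet.{0}) =>
      (SSet.stdSimplex.const 0 0 (op ⦋0⦌) ∈ S.obj (op ⦋0⦌) : Prop)) := by
  intro S S' h
  apply Subfunctor.ext
  funext U
  ext x
  rw [eq_const_zero U x, const_mem_iff S, const_mem_iff S']
  rw [show (SSet.stdSimplex.const 0 0 (op ⦋0⦌) ∈ S.obj (op ⦋0⦌) : Prop)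
      = (SSet.stdSimplex.const 0 0 (op ⦋0⦌) ∈ S'.obj (op ⦋0⦌) : Prop) from h]

end Std

section Delta1

def stdId (n : ℕ) : (Δ[n] : SSet.{0}) _⦋n⦌ := SSet.stdSimplex.objEquiv.symm (𝟙 _)

lemma ne_fin2 : ∀ a k : Fin 2, a ≠ k → a = (if k = 0 then 1 else 0) := by decide

lemma const_or_surj (U : SimplexCategoryᵒᵖ) (x : (Δ[1] : SSet.{0}).obj U) :
    (∃ k, x = SSet.stdSimplex.const 1 k U) ∨
      Function.Surjective x.down.toOrderHom := by
  by_cases hs : Function.Surjective x.down.toOrderHom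
  · exact Or.inr hs
  · left
    rw [Function.Surjective] at hs
    push_neg at hs
    obtain ⟨k, hk⟩ := hs
    refine ⟨if k = 0 then 1 else 0, ?_⟩
    apply ULift.down_injective
    apply SimplexCategory.Hom.ext
    apply OrderHom.ext
    funext j
    exact ne_fin2 _ _ (hk j)

lemma mem_iff_id {S : Subfunctor (Δ[1] : SSet.{0})} {U : SimplexCategoryᵒᵖ}
    {x : (Δ[1] : SSet.{0}).obj U} (hs : Function.Surjective x.down.toOrderHom) :
    x ∈ S.obj U ↔ stdId 1 ∈ S.obj (op ⦋1⦌) := by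
  constructor
  · intro h
    obtain ⟨i0, h0⟩ := hs 0
    obtain ⟨i1, h1⟩ := hs 1
    have hle : i0 ≤ i1 := by
      by_contra hlt
      have := x.down.toOrderHom.monotone (le_of_not_ge hlt)
      rw [h0, h1] at this
      exact absurd this (by decide)
    set s : (⦋1⦌ : SimplexCategory) ⟶ U.unop :=
      SimplexCategory.Hom.mk ⟨fun j => if j = 0 then i0 else i1, by
        intro a b hab
        dsimp only
        by_cases ha : a = 0
        · by_cases hb : b = 0 <;> simp [ha, hb, hle]
        · have hb : b ≠ 0 := by
            intro hb0
            rw [ne_fin2 a 0 ha, hb0] at hab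
            exact absurd hab (by decide)
          simp [ha, hb]⟩ with hs_def
    have hmap : Δ[1].map s.op x = stdId 1 := by
      apply ULift.down_injective
      apply SimplexCategory.Hom.ext
      apply OrderHom.ext
      funext j
      show x.down.toOrderHom (if j = 0 then i0 else i1) = j
      by_cases hj : j = 0
      · rw [hj]; simpa using h0
      · have : j = 1 := ne_fin2 j 0 hj
        rw [this]; simpa using h1
    have := S.map s.op h
    rwa [Set.mem_preimage, hmap] at this
  · intro h
    have := S.map x.down.op h
    rw [Set.mem_preimage] at this
    convert this using 1
    apply ULift.down_injective
    show x.down = x.down ≫ 𝟙 _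
    rw [Category.comp_id]

lemma sub1_inj : Function.Injective
    (fun S : Subfunctor (Δ[1] : SSet.{0}) =>
      ((SSet.stdSimplex.const 1 0 (op ⦋0⦌) ∈ S.obj (op ⦋0⦌) : Prop),
       (SSet.stdSimplex.const 1 1 (op ⦋0⦌) ∈ S.obj (op ⦋0⦌) : Prop),
       (stdId 1 ∈ S.obj (op ⦋1⦌) : Prop))) := by
  intro S S' h
  have h0 := congrArg Prod.fst h
  have h1 := congrArg (fun a => a.2.1) h
  have h2 := congrArg (fun a => a.2.2) h
  dsimp at h0 h1 h2
  apply Subfunctor.ext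
  funext U
  ext x
  rcases const_or_surj U x with ⟨k, rfl⟩ | hs
  · rw [const_mem_iff S, const_mem_iff S']
    match k with
    | 0 => rw [show _ = _ from h0]
    | 1 => rw [show _ = _ from h1]
  · rw [mem_iff_id hs, mem_iff_id hs, show _ = _ from h2]

end Delta1

section Delta2

def bitf (k : Fin 8) : Fin 3 → Bool := fun i => Nat.testBit k.1 i.1

def idx (f : Fin 3 → Bool) : Fin 8 :=
  ⟨(if f 0 then 1 else 0) + (if f 1 then 2 else 0) + (if f 2 then 4 else 0), by
    split <;> split <;> split <;> omega⟩

set_option maxRecDepth 1000000 in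
lemma bitf_idx : ∀ f : Fin 3 → Bool, bitf (idx f) = f := by decide

lemma idx_bitf : ∀ k : Fin 8, idx (bitf k) = k := by decide

lemma bitf_zero : bitf 0 = fun _ => false := by decide

lemma bitf_ne_zero : ∀ k : Fin 8, k ≠ 0 → ∃ i, bitf k i = true := by decide

abbrev DownSet : Type :=
  {p : Fin 8 → Bool //
    (∀ a b : Fin 8, b ≠ 0 → (∀ i, bitf b i = true → bitf a i = true) →
      p a = true → p b = true) ∧ p 0 = false}

set_option maxRecDepth 1000000 in
lemma downset_card : 17 ≤ Fintype.card DownSet := by decide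

def rangeB {U : SimplexCategoryᵒᵖ} (x : (Δ[2] : SSet.{0}).obj U) : Fin 3 → Bool :=
  fun i => decide (∃ j, x.down.toOrderHom j = i)

lemma idx_rangeB_ne {U : SimplexCategoryᵒᵖ} (x : (Δ[2] : SSet.{0}).obj U) :
    idx (rangeB x) ≠ 0 := by
  intro h0
  have h1 : rangeB x = fun _ => false := by
    rw [← bitf_idx (rangeB x), h0, bitf_zero]
  have h2 : rangeB x (x.down.toOrderHom 0) = true :=
    decide_eq_true_iff.2 ⟨0, rfl⟩
  rw [h1] at h2
  exact Bool.false_ne_true h2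

def Sp (p : DownSet) : Subfunctor (Δ[2] : SSet.{0}) where
  obj U := {x | p.1 (idx (rangeB x)) = true}
  map {U V} i x hx := by
    refine p.2.1 (idx (rangeB x)) (idx (rangeB (Δ[2].map i x)))
      (idx_rangeB_ne _) ?_ hx
    intro k hk
    rw [bitf_idx] at hk ⊢
    rw [rangeB, decide_eq_true_iff] at hk ⊢
    obtain ⟨j, hj⟩ := hk
    exact ⟨(i.unop).toOrderHom j, hj⟩

def carrier (f : Fin 3 → Bool) : Finset (Fin 3) := Finset.univ.filter (fun i => f i = true)

lemma carrier_card (f : Fin 3 → Bool) (hf : ∃ i, f i = true) :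
    (carrier f).card = ((carrier f).card - 1) + 1 := by
  have : 0 < (carrier f).card := by
    obtain ⟨i, hi⟩ := hf
    exact Finset.card_pos.2 ⟨i, by simp [carrier, hi]⟩
  omega

def testSimp (f : Fin 3 → Bool) (hf : ∃ i, f i = true) :
    (Δ[2] : SSet.{0}).obj (op ⦋(carrier f).card - 1⦌) :=
  SSet.stdSimplex.objMk
    ⟨fun j => ((carrier f).orderIsoOfFin (carrier_card f hf) j).1,
     fun a b hab => by
        exact ((carrier f).orderIsoOfFin (carrier_card f hf)).le_iff_le.mpr hab⟩

lemma rangeB_testSimp (f : Fin 3 → Bool) (hf : ∃ i, f i = true) :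
    rangeB (testSimp f hf) = f := by
  funext i
  rw [rangeB]
  cases hfi : f i with
  | true =>
    rw [decide_eq_true_iff.2]
    obtain ⟨j, hj⟩ := ((carrier f).orderIsoOfFin (carrier_card f hf)).surjective
      ⟨i, by simp [carrier, hfi]⟩
    exact ⟨j, by rw [show ((testSimp f hf).down.toOrderHom j : Fin 3)
      = ((carrier f).orderIsoOfFin (carrier_card f hf) j).1 from rfl, hj]⟩
  | false =>
    rw [decide_eq_false]
    rintro ⟨j, hj⟩
    have hmem : ((carrier f).orderIsoOfFin (carrier_card f hf) j).1 ∈ carrier f :=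
      ((carrier f).orderIsoOfFin (carrier_card f hf) j).2
    rw [show ((testSimp f hf).down.toOrderHom j : Fin 3)
      = ((carrier f).orderIsoOfFin (carrier_card f hf) j).1 from rfl] at hj
    rw [hj] at hmem
    simp [carrier, hfi] at hmem

lemma Sp_inj : Function.Injective Sp := by
  intro p p' h
  apply Subtype.ext
  funext k
  by_cases hk : k = 0
  · rw [hk, p.2.2, p'.2.2]
  · have hf : ∃ i, bitf k i = true := bitf_ne_zero k hk
    have := congrArg (fun S : Subfunctor (Δ[2] : SSet.{0}) =>
      (testSimp (bitf k) hf ∈ S.obj (op ⦋(carrier (bitf k)).card - 1⦌) : Prop)) h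
    simp only [Sp, Set.mem_setOf_eq, rangeB_testSimp, idx_bitf] at this
    cases hp : p.1 k <;> cases hp' : p'.1 k <;> simp_all
end Delta2

lemma three_props (p q r : Prop) : p = q ∨ p = r ∨ q = r := by
  by_cases hp : p <;> by_cases hq : q <;> by_cases hr : r
  · exact Or.inl (propext (iff_of_true hp hq))
  · exact Or.inl (propext (iff_of_true hp hq))
  · exact Or.inr (Or.inl (propext (iff_of_true hp hr)))
  · exact Or.inr (Or.inr (propext (iff_of_false hq hr)))
  · exact Or.inr (Or.inr (propext (iff_of_true hq hr)))
  · exact Or.inr (Or.inl (propext (iff_of_false hp hr)))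
  · exact Or.inl (propext (iff_of_false hp hq))
  · exact Or.inl (propext (iff_of_false hp hq))

section Main

variable [HasTerminal NsSet] {Ωn : NsSet} {t : ⊤_ NsSet ⟶ Ωn}

lemma eqSub_inj
    (Hcl : ∀ (U A : NsSet) (m : U ⟶ A), Mono m →
      ∃! χ : A ⟶ Ωn, IsPullback m (terminal.from U) χ t)
    {B : NsSet} {χ₁ χ₂ : B ⟶ Ωn} (h : eqSub t χ₁ = eqSub t χ₂) : χ₁ = χ₂ := by
  obtain ⟨χ, hχ, hu⟩ := Hcl (nsSub (eqSub t χ₁)) B (nsι _) inferInstance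
  have h1 := hu χ₁ (key1 t χ₁)
  have h2' := key1 t χ₂
  rw [← h] at h2'
  exact h1.trans (hu χ₂ h2').symm

lemma exists_cls
    (Hcl : ∀ (U A : NsSet) (m : U ⟶ A), Mono m →
      ∃! χ : A ⟶ Ωn, IsPullback m (terminal.from U) χ t)
    {B : NsSet} (S : Subfunctor B.obj) : ∃ χ : B ⟶ Ωn, eqSub t χ = S := by
  obtain ⟨χ, hχ, -⟩ := Hcl (nsSub S) B (nsι S) inferInstance
  refine ⟨χ, ?_⟩
  apply Subfunctor.ext
  funext k
  ext x
  rw [key2 t hχ k x]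
  constructor
  · rintro ⟨u, rfl⟩
    exact u.2
  · intro hx
    exact ⟨⟨x, hx⟩, rfl⟩

end Main

/-- The category of non-singular simplicial sets does not admit
a subobject classifier: there is no non-singular simplicial set `Ω` together
with a monomorphism `t : 1 → Ω` such that every monomorphism is a pullback of
`t` in a unique way. -/
theorem nsSet_no_subobject_classifier [HasTerminal NsSet] :
    ¬ ∃ (Ω : NsSet) (t : ⊤_ NsSet ⟶ Ω),
        Mono t ∧
          ∀ (U A : NsSet) (m : U ⟶ A), Mono m →
            ∃! χ : A ⟶ Ω, IsPullback m (terminal.from U) χ t := by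
  rintro ⟨Ωn, t, -, Hcl⟩
  -- injective "vertex invariant" with values in Prop
  set K0 : Ωn.obj _⦋0⦌ → Prop := fun w =>
    (SSet.stdSimplex.const 0 0 (op ⦋0⦌) ∈
      (eqSub t (show stdNs 0 ⟶ Ωn from ObjectProperty.homMk (SSet.yonedaEquiv.symm w))).obj (op ⦋0⦌) : Prop)
    with hK0
  have K0inj : Function.Injective K0 := by
    intro w w' hw
    apply SSet.yonedaEquiv.symm.injective
    exact congrArg InducedCategory.Hom.hom (eqSub_inj Hcl (sub0_inj hw))
  -- every 2-simplex of Ωn is degenerate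
  have deg2 : ∀ x : Ωn.obj _⦋2⦌, SSet.IsDegenerate Ωn.obj x := by
    intro x
    by_contra hx
    have hrep := Ωn.property 2 x hx (op ⦋0⦌)
    set g : Fin 3 → Prop := fun i =>
      K0 ((SSet.yonedaEquiv.symm x).app (op ⦋0⦌)
        (SSet.stdSimplex.const 2 i (op ⦋0⦌))) with hg
    have ginj : Function.Injective g := by
      intro i j hij
      have h1 := hrep (K0inj hij)
      exact congrArg (fun z => z.down.toOrderHom 0) h1
    rcases three_props (g 0) (g 1) (g 2) with h | h | h
    · exact absurd (ginj h) (by decide)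
    · exact absurd (ginj h) (by decide)
    · exact absurd (ginj h) (by decide)
  -- decompose 2-simplices through 1-simplices
  have hdeg : ∀ x : Ωn.obj _⦋1+1⦌, ∃ j : Fin (1+1),
      Ωn.obj.map (SimplexCategory.σ j).op
        (Ωn.obj.map (SimplexCategory.δ j.castSucc).op x) = x :=
    fun x => (isDeg_iff Ωn.obj x).1 (deg2 x)
  choose jd hjd using hdeg
  set G : Ωn.obj _⦋1+1⦌ → Fin 2 × Ωn.obj _⦋1⦌ := fun x =>
    (jd x, Ωn.obj.map (SimplexCategory.δ (jd x).castSucc).op x) with hG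
  have Ginj : Function.Injective G := by
    intro x y hxy
    have h1 : jd x = jd y := congrArg Prod.fst hxy
    have h2 : Ωn.obj.map (SimplexCategory.δ (jd x).castSucc).op x
        = Ωn.obj.map (SimplexCategory.δ (jd y).castSucc).op y := congrArg Prod.snd hxy
    rw [h1] at h2
    have h3 := hjd x
    rw [h1, h2, hjd y] at h3
    exact h3.symm
  -- injective "edge invariant" with values in Prop × Prop × Prop
  set K1 : Ωn.obj _⦋1⦌ → Prop × Prop × Prop := fun w =>
    ((SSet.stdSimplex.const 1 0 (op ⦋0⦌) ∈
        (eqSub t (show stdNs 1 ⟶ Ωn from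
          ObjectProperty.homMk (SSet.yonedaEquiv.symm w))).obj (op ⦋0⦌) : Prop),
     (SSet.stdSimplex.const 1 1 (op ⦋0⦌) ∈
        (eqSub t (show stdNs 1 ⟶ Ωn from
          ObjectProperty.homMk (SSet.yonedaEquiv.symm w))).obj (op ⦋0⦌) : Prop),
     (stdId 1 ∈
        (eqSub t (show stdNs 1 ⟶ Ωn from
          ObjectProperty.homMk (SSet.yonedaEquiv.symm w))).obj (op ⦋1⦌) : Prop)) with hK1
  have K1inj : Function.Injective K1 := by
    intro w w' hw
    apply SSet.yonedaEquiv.symm.injective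
    exact congrArg InducedCategory.Hom.hom (eqSub_inj Hcl (sub1_inj hw))
  -- classify the downsets of Δ[2]
  choose cls hcls using fun p : DownSet => exists_cls Hcl (S := Sp p) (B := stdNs 2)
  set F : DownSet → Ωn.obj _⦋1+1⦌ := fun p =>
    SSet.yonedaEquiv (cls p).hom with hF
  have Finj : Function.Injective F := by
    intro p p' hp
    apply Sp_inj
    rw [← hcls p, ← hcls p']
    congr 1
    exact ObjectProperty.hom_ext _ (SSet.yonedaEquiv.injective hp)
  -- assemble
  set J : DownSet → Fin 2 × (Prop × Prop × Prop) := fun p =>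
    ((G (F p)).1, K1 (G (F p)).2) with hJ
  have Jinj : Function.Injective J := by
    intro p p' hp
    apply Finj
    apply Ginj
    have hp' : ((G (F p)).1, K1 (G (F p)).2) = ((G (F p')).1, K1 (G (F p')).2) := hp
    have h1 := congrArg Prod.fst hp'
    have h2 := K1inj (congrArg Prod.snd hp')
    exact Prod.ext h1 h2
  have hcard := Fintype.card_le_of_injective J Jinj
  have h16 : Fintype.card (Fin 2 × (Prop × Prop × Prop)) = 16 := by
    simp [Fintype.card_prop]
  have h17 := downset_card
  omega
end
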